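/- Under the Misra-Bugajski map, R(μ) equals a rank-one projection P if and only if μ is the Dirac measure δ_P; in particular R restricts to a bijection between Dirac measures and pure quantum states. -/

import Mathlib

open MeasureTheory Topology Filter

/-- The rank-one operator `|φ⟩⟨φ|`. -/
noncomputable def rankOne {H : Type*} [NormedAddCommGroup H] [InnerProductSpace ℂ H]
    (φ : H) : H →L[ℂ] H := (innerSL ℂ φ).smulRight φ

/-- The set of rank-one orthogonal projections (pure states / projective Hilbert space). -/
noncomputable def projSet (H : Type*) [NormedAddCommGroup H] [InnerProductSpace ℂ H] :
    Set (H →L[ℂ] H) := {T | ∃ φ : H, ‖φ‖ = 1 ∧ T = rankOne φ}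

/-- The trace of an operator computed along a Hilbert basis. -/
noncomputable def traceAlong {H ι : Type*} [NormedAddCommGroup H] [InnerProductSpace ℂ H]
    (b : HilbertBasis ι ℂ H) (A : H →L[ℂ] H) : ℂ :=
  ∑' i, inner ℂ (b i) (A (b i))

/-- `W` is a density operator: positive, trace class, with trace one
(trace computed along the Hilbert basis `b`). -/
noncomputable def IsDensityOp {H ι : Type*} [NormedAddCommGroup H] [InnerProductSpace ℂ H]
    [CompleteSpace H] (b : HilbertBasis ι ℂ H) (W : H →L[ℂ] H) : Prop :=
  W.IsPositive ∧ HasSum (fun i => (inner ℂ (b i) (W (b i)) : ℂ)) 1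

/-- `W` is the image of `μ` under the Misra-Bugajski map:
`tr(W A) = ∫ tr(P A) dμ(P)` for all bounded self-adjoint `A`. -/
noncomputable def IsMB {H ι : Type*} [NormedAddCommGroup H] [InnerProductSpace ℂ H]
    [CompleteSpace H] [MeasurableSpace ↥(projSet H)] (b : HilbertBasis ι ℂ H)
    (μ : Measure ↥(projSet H)) (W : H →L[ℂ] H) : Prop :=
  IsDensityOp b W ∧ ∀ A : H →L[ℂ] H, IsSelfAdjoint A →
    traceAlong b (W * A) = ∫ P, traceAlong b (P.1 * A) ∂μ

section Aux

variable {H ι : Type*} [NormedAddCommGroup H] [InnerProductSpace ℂ H]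

local notation "⟪" x ", " y "⟫" => @inner ℂ _ _ x y

lemma rankOne_apply (φ x : H) : rankOne φ x = ⟪φ, x⟫ • φ := rfl

lemma rankOne_smul (r : ℂ) (hr : ‖r‖ = 1) (φ : H) : rankOne (r • φ) = rankOne φ := by
  ext x
  have hrr : (starRingEnd ℂ) r * r = 1 := by
    rw [RCLike.conj_mul]
    norm_cast
    simp [hr]
  simp only [rankOne_apply, inner_smul_left, smul_smul]
  rw [show (starRingEnd ℂ) r * ⟪φ, x⟫ * r = ((starRingEnd ℂ) r * r) * ⟪φ, x⟫ by ring, hrr,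
    one_mul]

lemma isSelfAdjoint_rankOne [CompleteSpace H] (φ : H) : IsSelfAdjoint (rankOne φ) := by
  rw [ContinuousLinearMap.isSelfAdjoint_iff_isSymmetric]
  intro x y
  simp only [ContinuousLinearMap.coe_coe, rankOne_apply, inner_smul_left, inner_smul_right,
    inner_conj_symm]
  ring

lemma mul_inner_symm (ψ φ : H) : (inner ℂ ψ φ : ℂ) * inner ℂ φ ψ = ((‖(inner ℂ φ ψ : ℂ)‖ ^ 2 : ℝ) : ℂ) := by
  rw [← inner_conj_symm ψ φ, RCLike.conj_mul]
  norm_cast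

lemma isPositive_rankOne [CompleteSpace H] (φ : H) : (rankOne φ).IsPositive := by
  refine ⟨ContinuousLinearMap.isSelfAdjoint_iff_isSymmetric.1 (isSelfAdjoint_rankOne φ), fun x => ?_⟩
  have h1 : ⟪rankOne φ x, x⟫ = ((‖⟪φ, x⟫‖ ^ 2 : ℝ) : ℂ) := by
    rw [rankOne_apply, inner_smul_left, RCLike.conj_mul]
    norm_cast
  have h2 : (rankOne φ).reApplyInnerSelf x = ‖⟪φ, x⟫‖ ^ 2 := by
    rw [ContinuousLinearMap.reApplyInnerSelf_apply, h1]
    simp [← Complex.ofReal_pow]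
  rw [h2]
  positivity

lemma hasSum_inner_rankOne [CompleteSpace H] (b : HilbertBasis ι ℂ H) (φ : H) (hφ : ‖φ‖ = 1) :
    HasSum (fun i => (⟪b i, rankOne φ (b i)⟫ : ℂ)) 1 := by
  have h := b.hasSum_inner_mul_inner φ φ
  have hφφ : (⟪φ, φ⟫ : ℂ) = 1 := by
    rw [inner_self_eq_norm_sq_to_K, hφ]; norm_num
  rw [hφφ] at h
  convert! h using 2 with i
  rw [rankOne_apply, inner_smul_right, mul_comm]

lemma hasSum_trace_mul [CompleteSpace H] (b : HilbertBasis ι ℂ H) (ψ φ : H) :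
    HasSum (fun i => (⟪b i, (rankOne ψ * rankOne φ) (b i)⟫ : ℂ)) (⟪ψ, φ⟫ * ⟪φ, ψ⟫) := by
  have h := (b.hasSum_inner_mul_inner φ ψ).mul_left (⟪ψ, φ⟫ : ℂ)
  convert! h using 2 with i
  simp only [ContinuousLinearMap.mul_apply, rankOne_apply, inner_smul_right, _root_.map_smul,
    smul_smul]
  ring

lemma traceAlong_rankOne_mul [CompleteSpace H] (b : HilbertBasis ι ℂ H) (ψ φ : H) :
    traceAlong b (rankOne ψ * rankOne φ) = ⟪ψ, φ⟫ * ⟪φ, ψ⟫ :=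
  (hasSum_trace_mul b ψ φ).tsum_eq

lemma inner_rankOne_self (ψ φ : H) : ⟪φ, rankOne ψ φ⟫ = ⟪ψ, φ⟫ * ⟪φ, ψ⟫ := by
  rw [rankOne_apply, inner_smul_right]

end Aux

set_option synthInstance.maxHeartbeats 1000000 in
theorem stmt15 {H ι : Type*} [NormedAddCommGroup H] [InnerProductSpace ℂ H] [CompleteSpace H]
    [Nontrivial H] [SecondCountableTopology H] (b : HilbertBasis ι ℂ H)
    [MeasurableSpace ↥(projSet H)] [BorelSpace ↥(projSet H)] :
    (∀ (μ : Measure ↥(projSet H)) [IsProbabilityMeasure μ] (p : ↥(projSet H)),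
        IsMB b μ (p : H →L[ℂ] H) ↔ μ = Measure.dirac p) ∧
    (∀ p : ↥(projSet H), IsMB b (Measure.dirac p) (p : H →L[ℂ] H)) := by
  -- The dirac direction / second conjunct
  have dirac_dir : ∀ p : ↥(projSet H), IsMB b (Measure.dirac p) (p : H →L[ℂ] H) := by
    intro p
    obtain ⟨φ, hφ, hp⟩ := p.2
    constructor
    · constructor
      · rw [hp]; exact isPositive_rankOne φ
      · rw [hp]; exact hasSum_inner_rankOne b φ hφ
    · intro A hA
      rw [integral_dirac]
  refine ⟨fun μ _ p => ⟨?_, fun h => h ▸ dirac_dir p⟩, dirac_dir⟩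
  -- Forward direction
  intro h
  obtain ⟨φ, hφ, hp⟩ := p.2
  have hφ0 : φ ≠ 0 := fun h0 => by simp [h0] at hφ
  have hφφ : (inner ℂ φ φ : ℂ) = 1 := by
    rw [inner_self_eq_norm_sq_to_K, hφ]; norm_num
  -- the real-valued "fidelity" function
  set g : ↥(projSet H) → ℝ := fun P => Complex.re (inner ℂ φ (P.1 φ)) with hg
  -- pointwise facts about g
  have key : ∀ P : ↥(projSet H),
      traceAlong b (P.1 * ↑p) = ((g P : ℝ) : ℂ) ∧ 0 ≤ g P ∧ g P ≤ 1 ∧ (g P = 1 → P = p) := by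
    intro P
    obtain ⟨ψ, hψ, hP⟩ := P.2
    have hψ0 : ψ ≠ 0 := fun h0 => by simp [h0] at hψ
    have htr : traceAlong b (P.1 * ↑p) = ((‖(inner ℂ φ ψ : ℂ)‖ ^ 2 : ℝ) : ℂ) := by
      rw [hp, hP, traceAlong_rankOne_mul, mul_inner_symm]
    have hinner : (inner ℂ φ (P.1 φ) : ℂ) = ((‖(inner ℂ φ ψ : ℂ)‖ ^ 2 : ℝ) : ℂ) := by
      rw [hP, inner_rankOne_self, mul_inner_symm]
    have hgP : g P = ‖(inner ℂ φ ψ : ℂ)‖ ^ 2 := by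
      rw [hg]; simp only [hinner, Complex.ofReal_re]
    refine ⟨by rw [htr, hgP], by rw [hgP]; positivity, ?_, ?_⟩
    · rw [hgP]
      have := norm_inner_le_norm (𝕜 := ℂ) φ ψ
      rw [hφ, hψ] at this
      nlinarith [norm_nonneg (inner ℂ φ ψ : ℂ)]
    · intro hg1
      rw [hgP] at hg1
      have hn : ‖(inner ℂ φ ψ : ℂ)‖ = 1 := by
        nlinarith [norm_nonneg (inner ℂ φ ψ : ℂ)]
      have : ‖(inner ℂ φ ψ : ℂ)‖ = ‖φ‖ * ‖ψ‖ := by rw [hφ, hψ, hn]; ring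
      obtain ⟨r, hr0, hrψ⟩ := (norm_inner_eq_norm_iff hφ0 hψ0).1 this
      have hrn : ‖r‖ = 1 := by
        have := hψ
        rw [hrψ, norm_smul, hφ, mul_one] at this
        exact this
      apply Subtype.ext
      rw [hP, hrψ, rankOne_smul r hrn, ← hp]
  -- continuity / integrability of g
  have hgc : Continuous g := by
    apply Complex.continuous_re.comp
    exact Continuous.inner continuous_const
      ((ContinuousLinearMap.apply ℂ H φ).continuous.comp continuous_subtype_val)
  have hgi : Integrable g μ := by
    refine Integrable.mono' (integrable_const (1 : ℝ)) hgc.aestronglyMeasurable ?_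
    filter_upwards with P
    rw [Real.norm_eq_abs, abs_le]
    exact ⟨by linarith [(key P).2.1], (key P).2.2.1⟩
  -- the trace identity with A = p gives ∫ g = 1
  have hA := h.2 ↑p (hp ▸ isSelfAdjoint_rankOne φ)
  have hlhs : traceAlong b ((↑p : H →L[ℂ] H) * ↑p) = 1 := by
    rw [hp, traceAlong_rankOne_mul, hφφ, one_mul]
  have hofReal : ∫ P, ((g P : ℝ) : ℂ) ∂μ = ((∫ P, g P ∂μ : ℝ) : ℂ) := integral_ofReal
  have hint : ((∫ P, g P ∂μ : ℝ) : ℂ) = 1 := by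
    rw [← hofReal, ← integral_congr_ae (ae_of_all _ fun P => (key P).1), ← hA, hlhs]
  have hint1 : ∫ P, g P ∂μ = 1 := by exact_mod_cast hint
  -- deduce g = 1 a.e.
  have hsub : ∫ P, (1 - g P) ∂μ = 0 := by
    rw [integral_sub (integrable_const 1) hgi, hint1, integral_const]
    simp
  have hae : (fun P => 1 - g P) =ᵐ[μ] 0 :=
    (integral_eq_zero_iff_of_nonneg_ae (ae_of_all _ fun P => by
          simpa using (key P).2.2.1) ((integrable_const 1).sub hgi)).1 hsub
  have haep : ∀ᵐ P ∂μ, P = p := by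
    filter_upwards [hae] with P hP
    simp only [Pi.zero_apply] at hP
    exact (key P).2.2.2 (by linarith)
  have hnull : μ {P | P ≠ p} = 0 := by
    have := haep
    rwa [ae_iff] at this
  -- conclude μ = dirac p
  ext s hs
  rw [Measure.dirac_apply' _ hs]
  by_cases hps : p ∈ s
  · rw [Set.indicator_of_mem hps]
    have hcompl : μ sᶜ = 0 := by
      refine measure_mono_null ?_ hnull
      intro P hP hPp
      rw [hPp] at hP
      exact hP hps
    simpa using (prob_compl_eq_zero_iff₀ hs.nullMeasurableSet).1 hcompl
  · rw [Set.indicator_of_notMem hps]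
    refine measure_mono_null ?_ hnull
    intro P hP hPp
    rw [hPp] at hP
    exact hps hP
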